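/- For a finite abelian p-group G ≅ Z/p^{d_1} × ⋯ × Z/p^{d_k} with 1 ≤ d_1 ≤ ⋯ ≤ d_k, the total number of cyclic subgroups of G equals 1 + (1/(p-1)) · Σ_{i=0}^{k-2} p^{d_0+⋯+d_i} · (p^{k-i}-1)/(p^{k-i-1}-1) · (p^{(k-i-1)d_{i+1}} - p^{(k-i-1)d_i}) + (d_k - d_{k-1}) p^{d_0+⋯+d_{k-1}}, where d_0 = 0. -/

import Mathlib

open Finset Subgroup

open Finset Subgroup

lemma myIsCyclic_zpowers {α} [Group α] (a : α) : IsCyclic (Subgroup.zpowers a) := by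
  refine ⟨⟨⟨a, Subgroup.mem_zpowers a⟩, fun x => ?_⟩⟩
  obtain ⟨n, hn⟩ := x.2
  exact ⟨n, Subtype.ext (by simpa using hn)⟩

lemma myZpowers_eq_iff {α} [Group α] [Finite α] (a b : α) :
    zpowers b = zpowers a ↔ b ∈ zpowers a ∧ orderOf b = orderOf a := by
  constructor
  · intro h
    refine ⟨h ▸ mem_zpowers b, ?_⟩
    rw [← Nat.card_zpowers, h, Nat.card_zpowers]
  · rintro ⟨hmem, hord⟩
    refine Subgroup.eq_of_le_of_card_ge ((zpowers_le).mpr hmem) ?_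
    rw [Nat.card_zpowers, Nat.card_zpowers, hord]

lemma myGenCount {α} [Group α] [Fintype α] [DecidableEq α] (a : α) [DecidablePred fun b : α => zpowers b = zpowers a] :
    #(univ.filter fun b => zpowers b = zpowers a) = (orderOf a).totient := by
  have h1 : (univ.filter fun b => zpowers b = zpowers a) =
      (univ.filter fun b : α => b ∈ zpowers a ∧ orderOf b = orderOf a) := by
    apply Finset.filter_congr; intro b _; simp [myZpowers_eq_iff]
  rw [h1]
  have e : {b : α // b ∈ zpowers a ∧ orderOf b = orderOf a} ≃
      {b : zpowers a // orderOf b = orderOf a} :=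
    { toFun := fun x => ⟨⟨x.1, x.2.1⟩, by rw [Subgroup.orderOf_mk]; exact x.2.2⟩
      invFun := fun x => ⟨x.1.1, x.1.2, by rw [← Subgroup.orderOf_mk x.1.1 x.1.2]; exact x.2⟩
      left_inv := fun x => rfl
      right_inv := fun x => rfl }
  haveI := myIsCyclic_zpowers a
  classical
  calc #(univ.filter fun b : α => b ∈ zpowers a ∧ orderOf b = orderOf a)
      = Fintype.card {b : α // b ∈ zpowers a ∧ orderOf b = orderOf a} := by
        rw [Fintype.card_subtype]
    _ = Fintype.card {b : zpowers a // orderOf b = orderOf a} := Fintype.card_congr e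
    _ = #(univ.filter fun b : zpowers a => orderOf b = orderOf a) := by
        rw [Fintype.card_subtype]
    _ = (orderOf a).totient := by
        apply IsCyclic.card_orderOf_eq_totient
        rw [Fintype.card_zpowers]

lemma myCyclicCount {α} [Group α] [Fintype α] :
    (Nat.card {H : Subgroup α // IsCyclic H} : ℚ) =
      ∑ x : α, (1 : ℚ) / ((orderOf x).totient : ℚ) := by
  classical
  set s : Finset (Subgroup α) := univ.image (fun a : α => zpowers a) with hs
  have hmem : ∀ H : Subgroup α, H ∈ s ↔ IsCyclic H := by
    intro H
    constructor
    · rintro hH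
      simp only [hs, mem_image, mem_univ, true_and] at hH
      obtain ⟨a, rfl⟩ := hH
      exact myIsCyclic_zpowers a
    · intro hH
      obtain ⟨⟨g, hg⟩, hgen⟩ := hH.exists_generator
      simp only [hs, mem_image, mem_univ, true_and]
      refine ⟨g, ?_⟩
      ext x
      simp only [Subgroup.mem_zpowers_iff]
      constructor
      · rintro ⟨n, rfl⟩; exact H.zpow_mem hg n
      · intro hx
        obtain ⟨n, hn⟩ := hgen ⟨x, hx⟩
        exact ⟨n, by simpa using congrArg Subtype.val hn⟩
  have hcard : Nat.card {H : Subgroup α // IsCyclic H} = s.card := by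
    rw [Nat.card_eq_fintype_card]
    rw [Fintype.card_congr (Equiv.subtypeEquivRight (fun H => (hmem H).symm))]
    rw [Fintype.card_coe]
  rw [hcard]
  have hmaps : ∀ x ∈ (univ : Finset α), zpowers x ∈ s := by
    intro x _; simp [hs]
  rw [← Finset.sum_fiberwise_of_maps_to hmaps (fun x : α => (1:ℚ)/((orderOf x).totient : ℚ))]
  have hinner : ∀ H ∈ s, ∑ i ∈ filter (fun i => zpowers i = H) univ,
      (1:ℚ)/((orderOf i).totient : ℚ) = 1 := by
    intro H hH
    simp only [hs, mem_image, mem_univ, true_and] at hH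
    obtain ⟨a, rfl⟩ := hH
    have hcongr : ∀ i ∈ filter (fun i => zpowers i = zpowers a) univ,
        (1:ℚ)/((orderOf i).totient : ℚ) = 1/((orderOf a).totient : ℚ) := by
      intro i hi
      simp only [mem_filter] at hi
      rw [((myZpowers_eq_iff a i).mp hi.2).2]
    rw [Finset.sum_congr rfl hcongr, Finset.sum_const, myGenCount, nsmul_eq_mul, mul_one_div,
      div_self]
    exact_mod_cast (Nat.totient_pos.mpr (orderOf_pos a)).ne'
  rw [Finset.sum_congr rfl hinner, Finset.sum_const, nsmul_eq_mul, mul_one]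
open Finset Subgroup

lemma myZModCount (n t : ℕ) [NeZero n] :
    #(univ.filter fun a : ZMod n => addOrderOf a ∣ t) = Nat.gcd n t := by
  classical
  have hn : n ≠ 0 := NeZero.ne n
  have hdvd : ∀ a : ZMod n, addOrderOf a ∣ n := fun a => by
    simpa [ZMod.card] using addOrderOf_dvd_card (x := a)
  have h1 : (univ.filter fun a : ZMod n => addOrderOf a ∣ t)
      = univ.filter fun a : ZMod n => addOrderOf a ∣ Nat.gcd n t := by
    apply filter_congr; intro a _
    constructor
    · intro h; exact Nat.dvd_gcd (hdvd a) h
    · intro h; exact h.trans (Nat.gcd_dvd_right n t)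
  rw [h1]
  have hmaps : ∀ a ∈ univ.filter (fun a : ZMod n => addOrderOf a ∣ Nat.gcd n t),
      addOrderOf a ∈ (Nat.gcd n t).divisors := by
    intro a ha; simp only [mem_filter] at ha
    exact Nat.mem_divisors.mpr ⟨ha.2, Nat.gcd_ne_zero_left hn⟩
  rw [Finset.card_eq_sum_card_fiberwise hmaps]
  have h2 : ∀ m ∈ (Nat.gcd n t).divisors,
      #((univ.filter fun a : ZMod n => addOrderOf a ∣ Nat.gcd n t).filter
        fun a => addOrderOf a = m) = m.totient := by
    intro m hm
    rw [Finset.filter_filter]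
    rw [Nat.mem_divisors] at hm
    have h3 : (univ.filter fun a : ZMod n => addOrderOf a ∣ Nat.gcd n t ∧ addOrderOf a = m)
        = univ.filter fun a : ZMod n => addOrderOf a = m := by
      apply filter_congr; intro a _
      constructor
      · exact fun h => h.2
      · exact fun h => ⟨h ▸ hm.1, h⟩
    rw [h3]
    apply IsAddCyclic.card_addOrderOf_eq_totient
    rw [ZMod.card]
    exact hm.1.trans (Nat.gcd_dvd_left n t)
  rw [Finset.sum_congr rfl h2]
  exact Nat.sum_totient _

lemma myGcdPow {p : ℕ} (hp : 1 ≤ p) (a b : ℕ) : Nat.gcd (p ^ a) (p ^ b) = p ^ min a b := by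
  rcases le_total a b with h | h
  · rw [Nat.gcd_eq_left (pow_dvd_pow p h), min_eq_left h]
  · rw [Nat.gcd_eq_right (pow_dvd_pow p h), min_eq_right h]

lemma myPowEqOne {A : Type*} [AddGroup A] (x : Multiplicative A) (n : ℕ) :
    x ^ n = 1 ↔ n • (Multiplicative.toAdd x) = 0 := Iff.rfl

lemma myTorsionCount (p k : ℕ) (hp : p.Prime) (d : ℕ → ℕ) (m : ℕ)
    [∀ i : Fin k, NeZero (p ^ d (i + 1))] :
    #(univ.filter fun x : Multiplicative (∀ i : Fin k, ZMod (p ^ d (i + 1))) =>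
        orderOf x ∣ p ^ m) = p ^ (∑ j ∈ Finset.range k, min (d (j + 1)) m) := by
  classical
  have hiff : ∀ x : Multiplicative (∀ i : Fin k, ZMod (p ^ d (i + 1))),
      (orderOf x ∣ p ^ m) ↔ ∀ i : Fin k, addOrderOf (Multiplicative.toAdd x i) ∣ p ^ m := by
    intro x
    rw [orderOf_dvd_iff_pow_eq_one, myPowEqOne]
    constructor
    · intro h i
      rw [addOrderOf_dvd_iff_nsmul_eq_zero]
      exact congrFun h i
    · intro h
      funext i
      exact addOrderOf_dvd_iff_nsmul_eq_zero.mp (h i)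
  rw [filter_congr (fun x _ => by rw [hiff x])]
  rw [← Fintype.card_subtype]
  have e : {x : Multiplicative (∀ i : Fin k, ZMod (p ^ d (i + 1))) //
        ∀ i : Fin k, addOrderOf (Multiplicative.toAdd x i) ∣ p ^ m} ≃
      ∀ i : Fin k, {a : ZMod (p ^ d (i + 1)) // addOrderOf a ∣ p ^ m} := by
    have e1 : {x : Multiplicative (∀ i : Fin k, ZMod (p ^ d (i + 1))) //
          ∀ i : Fin k, addOrderOf (Multiplicative.toAdd x i) ∣ p ^ m} ≃
        {y : ∀ i : Fin k, ZMod (p ^ d (i + 1)) // ∀ i : Fin k, addOrderOf (y i) ∣ p ^ m} :=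
      Multiplicative.toAdd.subtypeEquiv (fun x => Iff.rfl)
    exact e1.trans (Equiv.subtypePiEquivPi (p := fun (i : Fin k) (a : ZMod (p ^ d (↑i + 1))) => addOrderOf a ∣ p ^ m))
  rw [Fintype.card_congr e, Fintype.card_pi]
  have hcomp : ∀ i : Fin k,
      Fintype.card {a : ZMod (p ^ d (i + 1)) // addOrderOf a ∣ p ^ m} = p ^ min (d (i + 1)) m := by
    intro i
    rw [Fintype.card_subtype, myZModCount, myGcdPow hp.one_lt.le]
  rw [Finset.prod_congr rfl (fun i _ => hcomp i)]
  rw [Finset.prod_pow_eq_pow_sum]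
  congr 1
  exact Fin.sum_univ_eq_sum_range (fun j => min (d (j + 1)) m) k


lemma mySumPartition (f : ℕ → ℚ) (D : ℕ → ℕ) (k : ℕ)
    (h : ∀ i j, i ≤ j → j ≤ k → D i ≤ D j) :
    ∑ i ∈ Finset.range k, ∑ m ∈ Finset.Ico (D i) (D (i + 1)), f m
      = ∑ m ∈ Finset.Ico (D 0) (D k), f m := by
  induction k with
  | zero => simp
  | succ n IH =>
    rw [Finset.sum_range_succ, IH (fun i j hij hj => h i j hij (hj.trans n.le_succ))]
    exact Finset.sum_Ico_consecutive f (h 0 n (Nat.zero_le n) n.le_succ)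
      (h n (n + 1) n.le_succ le_rfl)

lemma myPowOneLt {p : ℕ} (hp : 2 ≤ p) {u : ℕ} (hu : 1 ≤ u) : (1 : ℚ) < (p : ℚ) ^ u := by
  have : (1 : ℚ) < (p : ℚ) := by exact_mod_cast hp
  calc (1:ℚ) < (p:ℚ) := this
    _ ≤ (p:ℚ) ^ u := le_self_pow₀ (by linarith) (by omega)

lemma myTermEq (p : ℚ) (hp0 : p ≠ 0) (hp1 : p - 1 ≠ 0) (S u t : ℕ) :
    (p ^ (S + (u+1)*(t+1)) - p ^ (S + (u+1)*t)) / (p ^ t * (p - 1))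
      = p ^ S * ((p ^ (u+1) - 1)/(p - 1)) * (p ^ u) ^ t := by
  have e1 : S + (u+1)*(t+1) = S + u*t + t + u + 1 := by ring
  have e2 : S + (u+1)*t = S + u*t + t := by ring
  rw [e1, e2]
  have hpt : p ^ t ≠ 0 := pow_ne_zero t hp0
  field_simp
  ring

section Aux

lemma myOrderIffPi {ι : Type*} {A : ι → Type*} [∀ i, AddGroup (A i)]
    (x : Multiplicative (∀ i, A i)) (n : ℕ) :
    orderOf x ∣ n ↔ ∀ i, addOrderOf (Multiplicative.toAdd x i) ∣ n := by
  rw [orderOf_dvd_iff_pow_eq_one, myPowEqOne]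
  constructor
  · intro h i
    rw [addOrderOf_dvd_iff_nsmul_eq_zero]
    exact congrFun h i
  · intro h
    funext i
    exact addOrderOf_dvd_iff_nsmul_eq_zero.mp (h i)

end Aux

theorem stmt_5 (p k : ℕ) (hp : p.Prime) (hk : 1 ≤ k) (d : ℕ → ℕ)
    (hd0 : d 0 = 0) (hd1 : 1 ≤ d 1)
    (hmono : ∀ i j, i ≤ j → j ≤ k → d i ≤ d j)
    (G : Type*) [CommGroup G]
    (hiso : Nonempty (G ≃* Multiplicative (∀ i : Fin k, ZMod (p ^ d (i + 1))))) :
    (Nat.card {H : Subgroup G // IsCyclic H} : ℚ) =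
      1 + (1 / ((p : ℚ) - 1)) *
        ∑ i ∈ Finset.range (k - 1),
          (p : ℚ) ^ (∑ j ∈ Finset.range (i + 1), d j) *
            (((p : ℚ) ^ (k - i) - 1) / ((p : ℚ) ^ (k - i - 1) - 1)) *
            ((p : ℚ) ^ ((k - i - 1) * d (i + 1)) - (p : ℚ) ^ ((k - i - 1) * d i)) +
      ((d k - d (k - 1) : ℕ) : ℚ) * (p : ℚ) ^ (∑ j ∈ Finset.range k, d j) := by
  classical
  obtain ⟨e⟩ := hiso
  haveI : ∀ i : Fin k, NeZero (p ^ d (i + 1)) := fun i => ⟨pow_ne_zero _ hp.ne_zero⟩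
  set α := Multiplicative (∀ i : Fin k, ZMod (p ^ d (i + 1))) with hα
  haveI : Fintype G := Fintype.ofEquiv α e.toEquiv.symm
  have hp2 : 2 ≤ p := hp.two_le
  have hpQ : (1 : ℚ) < (p : ℚ) := by exact_mod_cast hp2
  have hpne : (p : ℚ) - 1 ≠ 0 := by linarith
  -- step 0: reduce to a sum over α
  rw [myCyclicCount (α := G)]
  rw [Fintype.sum_equiv e.toEquiv (fun x : G => (1:ℚ)/((orderOf x).totient : ℚ))
    (fun y : α => (1:ℚ)/((orderOf y).totient : ℚ))
    (fun x => by show (1:ℚ)/((orderOf x).totient : ℚ) = (1:ℚ)/((orderOf (e x)).totient : ℚ); rw [MulEquiv.orderOf_eq])]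
  -- notation
  set c : ℕ → ℕ := fun m => #(univ.filter fun x : α => orderOf x = p ^ m) with hc
  set N : ℕ → ℕ := fun m => #(univ.filter fun x : α => orderOf x ∣ p ^ m) with hN
  have hNval : ∀ m, N m = p ^ (∑ j ∈ Finset.range k, min (d (j + 1)) m) := by
    intro m
    rw [hN, ← myTorsionCount p k hp d m]
  -- every element has p-power order, bounded by d k
  have hdvdk : ∀ x : α, orderOf x ∣ p ^ d k := by
    intro x
    rw [myOrderIffPi]
    intro i
    have h1 : addOrderOf (Multiplicative.toAdd x i) ∣ p ^ d (i + 1) := by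
      simpa [ZMod.card] using addOrderOf_dvd_card (x := Multiplicative.toAdd x i)
    exact h1.trans (pow_dvd_pow p (hmono (i + 1) k i.isLt le_rfl))
  set ex : α → ℕ := fun x => (orderOf x).factorization p with hex
  have hexval : ∀ x : α, orderOf x = p ^ ex x ∧ ex x ≤ d k := by
    intro x
    obtain ⟨j, hj, hxj⟩ := (Nat.dvd_prime_pow hp).mp (hdvdk x)
    have : ex x = j := by
      rw [hex]; simp only; rw [hxj, hp.factorization_pow, Finsupp.single_eq_same]
    exact ⟨this ▸ hxj, this ▸ hj⟩
  -- step 1: fiber the sum by ex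
  have hmaps : ∀ x ∈ (univ : Finset α), ex x ∈ Finset.range (d k + 1) :=
    fun x _ => Finset.mem_range.mpr (Nat.lt_succ_of_le (hexval x).2)
  rw [← Finset.sum_fiberwise_of_maps_to hmaps (fun y : α => (1:ℚ)/((orderOf y).totient : ℚ))]
  have hfib : ∀ m, (univ.filter fun x : α => ex x = m) = (univ.filter fun x : α => orderOf x = p ^ m) := by
    intro m
    apply filter_congr
    intro x _
    constructor
    · intro h; rw [(hexval x).1, h]
    · intro h
      have := (hexval x).1
      rw [h] at this
      exact Nat.pow_right_injective hp2 this.symm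
  have hstep1 : ∀ m ∈ Finset.range (d k + 1),
      ∑ x ∈ univ.filter (fun x : α => ex x = m), (1:ℚ)/((orderOf x).totient : ℚ)
        = (c m : ℚ) / ((p ^ m : ℕ).totient : ℚ) := by
    intro m _
    rw [hfib m]
    have hconst : ∀ x ∈ univ.filter (fun x : α => orderOf x = p ^ m),
        (1:ℚ)/((orderOf x).totient : ℚ) = (1:ℚ)/(((p ^ m : ℕ)).totient : ℚ) :=
      fun x hx => by rw [(Finset.mem_filter.mp hx).2]
    rw [Finset.sum_congr rfl hconst, Finset.sum_const, nsmul_eq_mul, mul_one_div]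
  rw [Finset.sum_congr rfl hstep1]
  -- abbreviation for the summand
  set Fq : ℕ → ℚ := fun m => (c m : ℚ) / (((p ^ m : ℕ)).totient : ℚ) with hFq
  have hdk1 : 1 ≤ d k := le_trans hd1 (hmono 1 k hk le_rfl)
  -- c 0 = 1 and Fq 0 = 1
  have hc0 : c 0 = 1 := by
    rw [hc]
    simp only [pow_zero]
    have : (univ.filter fun x : α => orderOf x = 1) = {(1 : α)} := by
      ext x
      simp [orderOf_eq_one_iff]
    rw [this, Finset.card_singleton]
  have hF0 : Fq 0 = 1 := by
    rw [hFq]; simp [hc0]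
  -- split off m = 0
  have hsplit0 : ∑ m ∈ Finset.range (d k + 1), Fq m
      = 1 + ∑ m ∈ Finset.Ico 1 (d k + 1), Fq m := by
    rw [Finset.range_eq_Ico,
      ← Finset.sum_Ico_consecutive Fq (Nat.zero_le 1) (by omega : 1 ≤ d k + 1)]
    congr 1
    rw [show Finset.Ico 0 1 = Finset.range 1 from Nat.Ico_zero_eq_range 1,
      Finset.sum_range_one, hF0]
  -- reindex
  have hre : ∑ m ∈ Finset.Ico 1 (d k + 1), Fq m = ∑ t ∈ Finset.Ico (d 0) (d k), Fq (t + 1) := by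
    rw [hd0, Finset.sum_Ico_eq_sum_range, Finset.sum_Ico_eq_sum_range]
    simp only [Nat.add_sub_cancel, Nat.sub_zero, zero_add]
    exact Finset.sum_congr rfl (fun i _ => by rw [add_comm 1 i])
  -- partition into intervals
  have hpart : ∑ t ∈ Finset.Ico (d 0) (d k), Fq (t + 1)
      = ∑ i ∈ Finset.range k, ∑ t ∈ Finset.Ico (d i) (d (i + 1)), Fq (t + 1) :=
    (mySumPartition (fun t => Fq (t + 1)) d k hmono).symm
  -- c in terms of N
  have hcN : ∀ t : ℕ, (c (t + 1) : ℚ) = (N (t + 1) : ℚ) - (N t : ℚ) := by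
    intro t
    have hsub : (univ.filter fun x : α => orderOf x ∣ p ^ t)
        ⊆ (univ.filter fun x : α => orderOf x ∣ p ^ (t + 1)) := by
      intro x hx
      simp only [Finset.mem_filter, Finset.mem_univ, true_and] at hx ⊢
      exact hx.trans (pow_dvd_pow p t.le_succ)
    have hsd : (univ.filter fun x : α => orderOf x = p ^ (t + 1))
        = (univ.filter fun x : α => orderOf x ∣ p ^ (t + 1))
          \ (univ.filter fun x : α => orderOf x ∣ p ^ t) := by
      ext x
      simp only [Finset.mem_filter, Finset.mem_sdiff, Finset.mem_univ, true_and]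
      constructor
      · intro h
        refine ⟨h ▸ dvd_rfl, ?_⟩
        rw [h]
        intro hdvd
        have := (Nat.pow_dvd_pow_iff_le_right hp.one_lt).mp hdvd
        omega
      · rintro ⟨h1, h2⟩
        obtain ⟨j, hj, hxj⟩ := (Nat.dvd_prime_pow hp).mp h1
        have hjt : ¬ j ≤ t := fun hjt => h2 (hxj ▸ pow_dvd_pow p hjt)
        have : j = t + 1 := by omega
        rw [hxj, this]
    have : c (t + 1) = N (t + 1) - N t := by
      rw [hc, hN]
      simp only
      rw [hsd, Finset.card_sdiff_of_subset hsub]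
    rw [this, Nat.cast_sub (Finset.card_le_card hsub)]
  -- min-sum evaluation
  have hminsum : ∀ i, i < k → ∀ n, d i ≤ n → n ≤ d (i + 1) →
      (∑ j ∈ Finset.range k, min (d (j + 1)) n)
        = (∑ j ∈ Finset.range (i + 1), d j) + (k - i) * n := by
    intro i hik n hn1 hn2
    have hsplit : ∑ j ∈ Finset.range k, min (d (j + 1)) n
        = ∑ j ∈ Finset.Ico 0 i, min (d (j + 1)) n + ∑ j ∈ Finset.Ico i k, min (d (j + 1)) n := by
      rw [Finset.range_eq_Ico,
        ← Finset.sum_Ico_consecutive _ (Nat.zero_le i) hik.le]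
    rw [hsplit]
    have h1 : ∑ j ∈ Finset.Ico 0 i, min (d (j + 1)) n = ∑ j ∈ Finset.range i, d (j + 1) := by
      rw [Nat.Ico_zero_eq_range]
      apply Finset.sum_congr rfl
      intro j hj
      rw [Finset.mem_range] at hj
      exact min_eq_left ((hmono (j + 1) i hj hik.le).trans hn1)
    have h2 : ∑ j ∈ Finset.Ico i k, min (d (j + 1)) n = (k - i) * n := by
      rw [Finset.sum_congr rfl (fun j hj => ?_), Finset.sum_const, Nat.card_Ico, smul_eq_mul]
      rw [Finset.mem_Ico] at hj
      exact min_eq_right (hn2.trans (hmono (i + 1) (j + 1) (by omega) (by omega)))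
    have h3 : ∑ j ∈ Finset.range (i + 1), d j = ∑ j ∈ Finset.range i, d (j + 1) := by
      rw [Finset.sum_range_succ' d i, hd0, add_zero]
    rw [h1, h2, h3]
  -- per-interval evaluation
  have hinterval : ∀ i ∈ Finset.range k,
      ∑ t ∈ Finset.Ico (d i) (d (i + 1)), Fq (t + 1)
        = (p : ℚ) ^ (∑ j ∈ Finset.range (i + 1), d j) *
            (((p : ℚ) ^ (k - i) - 1) / ((p : ℚ) - 1)) *
            ∑ t ∈ Finset.Ico (d i) (d (i + 1)), ((p : ℚ) ^ (k - i - 1)) ^ t := by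
    intro i hi
    rw [Finset.mem_range] at hi
    rw [Finset.mul_sum]
    apply Finset.sum_congr rfl
    intro t ht
    rw [Finset.mem_Ico] at ht
    have hu : k - i = (k - i - 1) + 1 := by omega
    have hN1 : (N (t + 1) : ℚ) = (p : ℚ) ^ ((∑ j ∈ Finset.range (i + 1), d j) + (k - i) * (t + 1)) := by
      rw [hNval, hminsum i hi (t + 1) (by omega) (by omega)]
      push_cast
      ring
    have hN0 : (N t : ℚ) = (p : ℚ) ^ ((∑ j ∈ Finset.range (i + 1), d j) + (k - i) * t) := by
      rw [hNval, hminsum i hi t ht.1 ht.2.le]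
      push_cast
      ring
    have hphi : (((p ^ (t + 1) : ℕ)).totient : ℚ) = (p : ℚ) ^ t * ((p : ℚ) - 1) := by
      rw [Nat.totient_prime_pow hp t.succ_pos]
      push_cast [Nat.cast_sub hp.one_le]
      ring_nf
    simp only [hFq]
    rw [hcN t, hN1, hN0, hphi, hu]
    exact myTermEq (p : ℚ) (by positivity) hpne _ _ _
  rw [hsplit0, hre, hpart, Finset.sum_congr rfl hinterval]
  set X : ℕ → ℚ := fun i => (p : ℚ) ^ (∑ j ∈ Finset.range (i + 1), d j) *
      (((p : ℚ) ^ (k - i) - 1) / ((p : ℚ) - 1)) *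
      ∑ t ∈ Finset.Ico (d i) (d (i + 1)), ((p : ℚ) ^ (k - i - 1)) ^ t with hX
  have hk1 : k - 1 + 1 = k := Nat.sub_add_cancel hk
  have hlast : ∑ i ∈ Finset.range k, X i = ∑ i ∈ Finset.range (k - 1), X i + X (k - 1) := by
    rw [← Finset.sum_range_succ X (k - 1), hk1]
  rw [hlast]
  have hkk : k - (k - 1) = 1 := by omega
  have hlastval : X (k - 1)
      = ((d k - d (k - 1) : ℕ) : ℚ) * (p : ℚ) ^ (∑ j ∈ Finset.range k, d j) := by
    simp only [hX]
    simp only [hk1, hkk, pow_one, Nat.sub_self, pow_zero, one_pow, Finset.sum_const,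
      Nat.card_Ico, nsmul_eq_mul, mul_one, div_self hpne]
    ring
  rw [hlastval]
  have hmid : ∀ i ∈ Finset.range (k - 1),
      X i = (1 / ((p : ℚ) - 1)) *
          ((p : ℚ) ^ (∑ j ∈ Finset.range (i + 1), d j) *
            (((p : ℚ) ^ (k - i) - 1) / ((p : ℚ) ^ (k - i - 1) - 1)) *
            ((p : ℚ) ^ ((k - i - 1) * d (i + 1)) - (p : ℚ) ^ ((k - i - 1) * d i))) := by
    intro i hi
    rw [Finset.mem_range] at hi
    have hq1 : (1 : ℚ) < (p : ℚ) ^ (k - i - 1) := myPowOneLt hp2 (by omega)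
    have hqne : ((p : ℚ) ^ (k - i - 1)) ≠ 1 := hq1.ne'
    have hqne0 : (p : ℚ) ^ (k - i - 1) - 1 ≠ 0 := sub_ne_zero.mpr hqne
    simp only [hX]
    rw [geom_sum_Ico hqne (hmono i (i + 1) i.le_succ (by omega)), ← pow_mul, ← pow_mul]
    field_simp
  rw [Finset.sum_congr rfl hmid, ← Finset.mul_sum]
  ring
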